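/- With δ = Σ_{i=1}^n t_i(t_i − 1) ∂/∂t_i, we have (δ + 1)(Σ_{j=1}^{n+1} tr(A_j A_{n+2})/(t_j − 1)) = θ_{n+3} d_{n+2} + θ_{n+2}(ρ + θ_{n+2}), where d_{n+2} is the (2,2)-entry of A_{n+2}. -/

import Mathlib

open Finset

noncomputable section

/-- Extend `t = (t₁, …, tₙ) : Fin n → ℂ` by the fixed points `t_{n+1} = 0` and
`t_{n+2} = 1` (0-based: indices `n` and `n+1` of `Fin (n+2)`). -/
def ext (n : ℕ) (t : Fin n → ℂ) (j : Fin (n + 2)) : ℂ :=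
  if h : (j : ℕ) < n then t ⟨j, h⟩ else if (j : ℕ) = n then 0 else 1

/-- Inclusion of indices `1, …, n` into `1, …, n+2` (0-based). -/
def inc (n : ℕ) : Fin n → Fin (n + 2) := Fin.castLE (by omega)

/-- The partial derivative `∂f/∂t_i` of a scalar function on `ℂⁿ`. -/
def pderiv (n : ℕ) (i : Fin n) (f : (Fin n → ℂ) → ℂ) (t : Fin n → ℂ) : ℂ :=
  fderiv ℂ f t (Pi.single i 1)

/-- `ρ = −(θ₁ + ⋯ + θ_{n+3})/2`. -/
def rho (n : ℕ) (θ : Fin (n + 3) → ℂ) : ℂ := -(∑ j, θ j) / 2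

/-- The constants `C_{ij} = −θ_iθ_j/2 + (θ_i² + θ_j²)/(2(n+1))
− (Σ_k θ_k²)/(2(n+1)(n+2))`. -/
def Cc (n : ℕ) (θ : Fin (n + 3) → ℂ) (i j : Fin (n + 2)) : ℂ :=
  -(θ (Fin.castSucc i) * θ (Fin.castSucc j)) / 2
    + (θ (Fin.castSucc i) ^ 2 + θ (Fin.castSucc j) ^ 2) / (2 * ((n : ℂ) + 1))
    - (∑ k, θ k ^ 2) / (2 * ((n : ℂ) + 1) * ((n : ℂ) + 2))

/-- `H̃_i = Σ_{1 ≤ j ≤ n+2, j ≠ i} tr(A_i A_j)/(t_i − t_j)`. -/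
def Htil (n : ℕ) (A : Fin (n + 2) → (Fin n → ℂ) → Matrix (Fin 2) (Fin 2) ℂ)
    (i : Fin n) (t : Fin n → ℂ) : ℂ :=
  ∑ j ∈ Finset.univ.filter (fun j => j ≠ inc n i),
    (A (inc n i) t * A j t).trace / (t i - ext n t j)

/-! ### Auxiliary lemmas -/

section aux

variable {n : ℕ} {i : Fin n} {t : Fin n → ℂ}

lemma pd_sum {α : Type*} (S : Finset α) (f : α → (Fin n → ℂ) → ℂ)
    (hf : ∀ a ∈ S, DifferentiableAt ℂ (f a) t) :
    pderiv n i (fun s => ∑ a ∈ S, f a s) t = ∑ a ∈ S, pderiv n i (f a) t := by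
  simp only [pderiv, fderiv_fun_sum hf]
  simp

lemma pd_mul {f g : (Fin n → ℂ) → ℂ} (hf : DifferentiableAt ℂ f t)
    (hg : DifferentiableAt ℂ g t) :
    pderiv n i (fun s => f s * g s) t = pderiv n i f t * g t + f t * pderiv n i g t := by
  simp only [pderiv, fderiv_fun_mul hf hg, ContinuousLinearMap.add_apply,
    ContinuousLinearMap.smul_apply, smul_eq_mul]
  ring

lemma pd_eval (i₀ : Fin n) :
    pderiv n i (fun s : Fin n → ℂ => s i₀) t = if i = i₀ then 1 else 0 := by
  have h : (fun s : Fin n → ℂ => s i₀)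
      = (ContinuousLinearMap.proj i₀ : (Fin n → ℂ) →L[ℂ] ℂ) := rfl
  rw [pderiv, h, ContinuousLinearMap.fderiv]
  simp [Pi.single_apply, eq_comm]

lemma pd_sub_const {f : (Fin n → ℂ) → ℂ} (c : ℂ) :
    pderiv n i (fun s => f s - c) t = pderiv n i f t := by
  simp only [pderiv, fderiv_sub_const]

lemma pd_const (c : ℂ) : pderiv n i (fun _ => c) t = 0 := by
  simp [pderiv]

lemma pd_inv {g : (Fin n → ℂ) → ℂ} (hg : DifferentiableAt ℂ g t) (h0 : g t ≠ 0) :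
    pderiv n i (fun s => (g s)⁻¹) t = -pderiv n i g t / (g t) ^ 2 := by
  have h : (fun s => (g s)⁻¹) = (fun x : ℂ => x⁻¹) ∘ g := rfl
  rw [pderiv, h, fderiv_comp t (differentiableAt_inv h0) hg, fderiv_inv]
  simp only [ContinuousLinearMap.coe_comp', Function.comp_apply,
    ContinuousLinearMap.smulRight_apply, ContinuousLinearMap.one_apply, smul_eq_mul,
    pderiv, ContinuousLinearMap.toSpanSingleton_apply]
  field_simp

lemma diffAt_div {f g : (Fin n → ℂ) → ℂ} (hf : DifferentiableAt ℂ f t)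
    (hg : DifferentiableAt ℂ g t) (h0 : g t ≠ 0) :
    DifferentiableAt ℂ (fun s => f s / g s) t := by
  have h : (fun s => f s / g s) = fun s => f s * (g s)⁻¹ := by
    funext s; rw [div_eq_mul_inv]
  rw [h]; exact hf.mul (hg.inv h0)

lemma pd_div {f g : (Fin n → ℂ) → ℂ} (hf : DifferentiableAt ℂ f t)
    (hg : DifferentiableAt ℂ g t) (h0 : g t ≠ 0) :
    pderiv n i (fun s => f s / g s) t
      = (pderiv n i f t * g t - f t * pderiv n i g t) / (g t) ^ 2 := by
  have h : (fun s => f s / g s) = fun s => f s * (g s)⁻¹ := by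
    funext s; rw [div_eq_mul_inv]
  rw [h, pd_mul (g := fun s => (g s)⁻¹) hf (hg.inv h0), pd_inv hg h0]
  field_simp
  ring

lemma ext_lt (t : Fin n → ℂ) (m : Fin (n + 2)) (h : (m : ℕ) < n) :
    ext n t m = t ⟨m, h⟩ := by
  unfold _root_.ext; rw [dif_pos h]

lemma ext_n (t : Fin n → ℂ) (m : Fin (n + 2)) (h : (m : ℕ) = n) :
    ext n t m = 0 := by
  unfold _root_.ext; rw [dif_neg (by omega), if_pos h]

lemma ext_n1 (t : Fin n → ℂ) (m : Fin (n + 2)) (h : (m : ℕ) = n + 1) :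
    ext n t m = 1 := by
  unfold _root_.ext; rw [dif_neg (by omega), if_neg (by omega)]

lemma sum_entry_mul {α : Type*} (S : Finset α) (g : α → Matrix (Fin 2) (Fin 2) ℂ)
    (Z : Matrix (Fin 2) (Fin 2) ℂ) :
    ∑ k : Fin 2, ∑ l : Fin 2, (∑ m ∈ S, g m k l) * Z l k
      = ∑ m ∈ S, ∑ k : Fin 2, ∑ l : Fin 2, g m k l * Z l k := by
  simp only [Finset.sum_mul]
  exact (Finset.sum_congr rfl fun k _ => Finset.sum_comm).trans Finset.sum_comm

end aux

/-- Main analytic lemma: value of `∂ᵢ` of the sum appearing in the theorem. -/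
lemma key (n : ℕ) (A : Fin (n + 2) → (Fin n → ℂ) → Matrix (Fin 2) (Fin 2) ℂ)
    (t : Fin n → ℂ) (i : Fin n)
    (hdiff : ∀ (j : Fin (n + 2)) (k l : Fin 2), DifferentiableAt ℂ (fun s => A j s k l) t)
    (hdist : ∀ j k : Fin (n + 2), j ≠ k → ext n t j ≠ ext n t k)
    (hS1 : ∀ (j : Fin (n + 2)), j ≠ inc n i → ∀ (k l : Fin 2),
        pderiv n i (fun s => A j s k l) t
          = ((t i - ext n t j)⁻¹ •
              (A (inc n i) t * A j t - A j t * A (inc n i) t)) k l)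
    (hS2 : ∀ (k l : Fin 2),
      pderiv n i (fun s => A (inc n i) s k l) t
        = ∑ j ∈ Finset.univ.filter (fun j => j ≠ inc n i),
            ((t i - ext n t j)⁻¹ •
              (A j t * A (inc n i) t - A (inc n i) t * A j t)) k l) :
    pderiv n i (fun s => ∑ j : Fin (n + 1),
        (A (Fin.castLE (Nat.le_succ (n + 1)) j) s * A ⟨n + 1, Nat.lt_succ_self (n + 1)⟩ s).trace
          / (ext n s (Fin.castLE (Nat.le_succ (n + 1)) j) - 1)) t
      = -(A (inc n i) t * A ⟨n + 1, Nat.lt_succ_self (n + 1)⟩ t).trace / (t i - 1) ^ 2 := by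
  have hle : n + 1 ≤ n + 2 := by omega
  set N : Fin (n + 2) := ⟨n + 1, by omega⟩ with hNdef
  have hNι : N ≠ inc n i := by
    simp only [hNdef, inc, Ne, Fin.ext_iff, Fin.coe_castLE]
    have := i.isLt; omega
  have extN : ext n t N = 1 := ext_n1 t N rfl
  have hιlt : ((inc n i : Fin (n + 2)) : ℕ) < n := i.isLt
  have extι : ext n t (inc n i) = t i := by
    rw [ext_lt t _ hιlt]; exact congrArg t (Fin.ext rfl)
  have hti1 : t i - 1 ≠ 0 := by
    have := hdist (inc n i) N hNι.symm
    rw [extι, extN] at this; exact sub_ne_zero.mpr this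
  have hden_ne : ∀ m : Fin (n + 2), m ≠ N → ext n t m - 1 ≠ 0 := by
    intro m hm
    have := hdist m N hm; rw [extN] at this; exact sub_ne_zero.mpr this
  have hsub_ne : ∀ m : Fin (n + 2), m ≠ inc n i → t i - ext n t m ≠ 0 := by
    intro m hm
    have := hdist (inc n i) m (Ne.symm hm); rw [extι] at this
    exact sub_ne_zero.mpr this
  -- trace as an explicit double sum
  have trfun : ∀ m : Fin (n + 2), (fun s => (A m s * A N s).trace)
      = fun s => ∑ k : Fin 2, ∑ l : Fin 2, A m s k l * A N s l k := by
    intro m; funext s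
    simp [Matrix.trace, Matrix.diag, Matrix.mul_apply]
  have hnum_diff : ∀ m, DifferentiableAt ℂ (fun s => (A m s * A N s).trace) t := by
    intro m; rw [trfun m]
    exact DifferentiableAt.fun_sum fun k _ =>
      DifferentiableAt.fun_sum fun l _ => (hdiff m k l).mul (hdiff N l k)
  have hnum_pd : ∀ m, pderiv n i (fun s => (A m s * A N s).trace) t
      = ∑ k : Fin 2, ∑ l : Fin 2,
          (pderiv n i (fun s => A m s k l) t * A N t l k
            + A m t k l * pderiv n i (fun s => A N s l k) t) := by
    intro m
    rw [trfun m]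
    calc pderiv n i (fun s => ∑ k : Fin 2, ∑ l : Fin 2, A m s k l * A N s l k) t
        = ∑ k : Fin 2, pderiv n i (fun s => ∑ l : Fin 2, A m s k l * A N s l k) t :=
          pd_sum _ _ (fun k _ =>
            DifferentiableAt.fun_sum fun l _ => (hdiff m k l).mul (hdiff N l k))
      _ = ∑ k : Fin 2, ∑ l : Fin 2, pderiv n i (fun s => A m s k l * A N s l k) t :=
          Finset.sum_congr rfl fun k _ =>
            pd_sum _ _ (fun l _ => (hdiff m k l).mul (hdiff N l k))
      _ = _ :=
          Finset.sum_congr rfl fun k _ => Finset.sum_congr rfl fun l _ =>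
            pd_mul (hdiff m k l) (hdiff N l k)
  -- derivative of the numerators, off-diagonal case
  have claim1 : ∀ m : Fin (n + 2), m ≠ inc n i →
      pderiv n i (fun s => (A m s * A N s).trace) t
        = ((t i - ext n t m)⁻¹ - (t i - 1)⁻¹)
            * ((A (inc n i) t * A m t - A m t * A (inc n i) t) * A N t).trace := by
    intro m hm
    rw [hnum_pd m]
    simp only [hS1 m hm, hS1 N hNι, extN]
    simp only [Fin.sum_univ_two, Matrix.smul_apply, Matrix.sub_apply, Matrix.mul_apply,
      smul_eq_mul, Matrix.trace_fin_two]
    ring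
  -- derivative of the numerator, diagonal case
  have claim2 : pderiv n i (fun s => (A (inc n i) s * A N s).trace) t
      = -∑ m ∈ Finset.univ.filter (fun m => m ≠ inc n i),
          (t i - ext n t m)⁻¹
            * ((A (inc n i) t * A m t - A m t * A (inc n i) t) * A N t).trace := by
    rw [hnum_pd (inc n i)]
    simp only [hS2, hS1 N hNι, extN]
    rw [show (∑ k : Fin 2, ∑ l : Fin 2,
        ((∑ m ∈ Finset.univ.filter (fun m => m ≠ inc n i),
            ((t i - ext n t m)⁻¹ •
              (A m t * A (inc n i) t - A (inc n i) t * A m t)) k l) * A N t l k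
          + A (inc n i) t k l
            * (((t i - 1)⁻¹ • (A (inc n i) t * A N t - A N t * A (inc n i) t)) l k)))
      = (∑ k : Fin 2, ∑ l : Fin 2,
          (∑ m ∈ Finset.univ.filter (fun m => m ≠ inc n i),
            ((t i - ext n t m)⁻¹ •
              (A m t * A (inc n i) t - A (inc n i) t * A m t)) k l) * A N t l k)
        + ∑ k : Fin 2, ∑ l : Fin 2, A (inc n i) t k l
            * (((t i - 1)⁻¹ • (A (inc n i) t * A N t - A N t * A (inc n i) t)) l k)
      from by simp only [Finset.sum_add_distrib]]
    have h2nd : (∑ k : Fin 2, ∑ l : Fin 2, A (inc n i) t k l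
        * (((t i - 1)⁻¹ • (A (inc n i) t * A N t - A N t * A (inc n i) t)) l k)) = 0 := by
      simp only [Fin.sum_univ_two, Matrix.smul_apply, Matrix.sub_apply, Matrix.mul_apply,
        smul_eq_mul]
      ring
    rw [sum_entry_mul, h2nd, add_zero, ← Finset.sum_neg_distrib]
    refine Finset.sum_congr rfl fun m _ => ?_
    simp only [Fin.sum_univ_two, Matrix.smul_apply, Matrix.sub_apply, Matrix.mul_apply,
      smul_eq_mul, Matrix.trace_fin_two]
    ring
  -- denominators
  have hdencases : ∀ j : Fin (n + 1),
      DifferentiableAt ℂ (fun s => ext n s (Fin.castLE hle j) - 1) t ∧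
      pderiv n i (fun s => ext n s (Fin.castLE hle j) - 1) t
        = (if Fin.castLE hle j = inc n i then 1 else 0) := by
    intro j
    rcases lt_or_ge (j : ℕ) n with h | h
    · have hfun : (fun s : Fin n → ℂ => ext n s (Fin.castLE hle j) - 1)
          = fun s => s ⟨(j : ℕ), h⟩ - 1 := by
        funext s; rw [ext_lt s _ h]
        exact congrArg (fun z => z - 1) (congrArg s (Fin.ext rfl))
      constructor
      · rw [hfun]
        exact ((ContinuousLinearMap.proj (R := ℂ) (φ := fun _ : Fin n => ℂ)
          (⟨(j : ℕ), h⟩ : Fin n)).differentiableAt).sub_const 1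
      · rw [hfun, pd_sub_const, pd_eval]
        have hiff : (i = (⟨(j : ℕ), h⟩ : Fin n)) ↔ (Fin.castLE hle j = inc n i) := by
          rw [Fin.ext_iff, Fin.ext_iff]
          simp only [inc, Fin.coe_castLE]
          omega
        rw [if_congr hiff rfl rfl]
    · have hj : (j : ℕ) = n := by have := j.isLt; omega
      have hfun : (fun s : Fin n → ℂ => ext n s (Fin.castLE hle j) - 1)
          = fun _ => (0 : ℂ) - 1 := by
        funext s; rw [ext_n s _ hj]
      have hne : Fin.castLE hle j ≠ inc n i := by
        simp only [Ne, Fin.ext_iff, Fin.coe_castLE, inc]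
        have := i.isLt; omega
      constructor
      · rw [hfun]; exact differentiableAt_const _
      · rw [hfun, if_neg hne]; exact pd_const _
  have hcastN : ∀ j : Fin (n + 1), Fin.castLE hle j ≠ N := by
    intro j
    simp only [Ne, Fin.ext_iff, Fin.coe_castLE, hNdef]
    have := j.isLt; omega
  have hsummand_diff : ∀ j : Fin (n + 1), DifferentiableAt ℂ
      (fun s => (A (Fin.castLE hle j) s * A N s).trace
        / (ext n s (Fin.castLE hle j) - 1)) t :=
    fun j => diffAt_div (hnum_diff _) (hdencases j).1 (hden_ne _ (hcastN j))
  -- the special index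
  have hilt : (i : ℕ) < n + 1 := by have := i.isLt; omega
  set jι : Fin (n + 1) := ⟨(i : ℕ), hilt⟩ with hjιdef
  have hjι_cast : Fin.castLE hle jι = inc n i := rfl
  -- the per-summand derivative
  have hpdF : ∀ j : Fin (n + 1),
      pderiv n i (fun s => (A (Fin.castLE hle j) s * A N s).trace
        / (ext n s (Fin.castLE hle j) - 1)) t
      = (pderiv n i (fun s => (A (Fin.castLE hle j) s * A N s).trace) t
            * (ext n t (Fin.castLE hle j) - 1)
          - (A (Fin.castLE hle j) t * A N t).trace
            * (if Fin.castLE hle j = inc n i then 1 else 0))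
        / (ext n t (Fin.castLE hle j) - 1) ^ 2 := by
    intro j
    rw [pd_div (hnum_diff _) (hdencases j).1 (hden_ne _ (hcastN j)), (hdencases j).2]
  have hTN : ((A (inc n i) t * A N t - A N t * A (inc n i) t) * A N t).trace = 0 := by
    simp only [Matrix.trace_fin_two, Matrix.mul_apply, Matrix.sub_apply, Fin.sum_univ_two]
    ring
  calc pderiv n i (fun s => ∑ j : Fin (n + 1),
        (A (Fin.castLE hle j) s * A N s).trace
          / (ext n s (Fin.castLE hle j) - 1)) t
      = ∑ j : Fin (n + 1), pderiv n i
          (fun s => (A (Fin.castLE hle j) s * A N s).trace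
            / (ext n s (Fin.castLE hle j) - 1)) t :=
        pd_sum _ _ (fun j _ => hsummand_diff j)
    _ = pderiv n i (fun s => (A (Fin.castLE hle jι) s * A N s).trace
            / (ext n s (Fin.castLE hle jι) - 1)) t
        + ∑ j ∈ Finset.univ.erase jι, pderiv n i
          (fun s => (A (Fin.castLE hle j) s * A N s).trace
            / (ext n s (Fin.castLE hle j) - 1)) t :=
        (Finset.add_sum_erase _ _ (Finset.mem_univ jι)).symm
    _ = ((-∑ m ∈ Finset.univ.filter (fun m => m ≠ inc n i),
            (t i - ext n t m)⁻¹
              * ((A (inc n i) t * A m t - A m t * A (inc n i) t) * A N t).trace)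
            * (t i - 1)
          - (A (inc n i) t * A N t).trace) / (t i - 1) ^ 2
        + (∑ m ∈ Finset.univ.filter (fun m => m ≠ inc n i),
            (t i - ext n t m)⁻¹
              * ((A (inc n i) t * A m t - A m t * A (inc n i) t) * A N t).trace)
          / (t i - 1) := by
        congr 1
        · rw [hpdF jι, hjι_cast, extι, claim2, if_pos rfl, mul_one]
        · rw [← Finset.add_sum_erase _
            (fun m => (t i - ext n t m)⁻¹
              * ((A (inc n i) t * A m t - A m t * A (inc n i) t) * A N t).trace)
            (Finset.mem_filter.mpr ⟨Finset.mem_univ N, hNι⟩)]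
          rw [hTN, mul_zero, zero_add, Finset.sum_div]
          refine Finset.sum_bij' (fun j _ => Fin.castLE hle j)
            (fun m hm => (⟨(m : ℕ), by
              have h1 := (Finset.mem_erase.mp hm).1
              have h2 := m.isLt
              simp only [Ne, Fin.ext_iff, hNdef] at h1
              omega⟩ : Fin (n + 1))) ?_ ?_ ?_ ?_ ?_
          · intro j hj
            refine Finset.mem_erase.mpr ⟨hcastN j, Finset.mem_filter.mpr
              ⟨Finset.mem_univ _, ?_⟩⟩
            have := (Finset.mem_erase.mp hj).1
            simp only [Ne, Fin.ext_iff, Fin.coe_castLE, inc]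
            intro hc
            exact this (Fin.ext hc)
          · intro m hm
            refine Finset.mem_erase.mpr ⟨?_, Finset.mem_univ _⟩
            have := (Finset.mem_filter.mp (Finset.mem_erase.mp hm).2).2
            simp only [Ne, Fin.ext_iff, hjιdef]
            intro hc
            exact this (Fin.ext hc)
          · intro j hj; exact Fin.ext rfl
          · intro m hm; exact Fin.ext rfl
          · intro j hj
            have hmι : Fin.castLE hle j ≠ inc n i := by
              have := (Finset.mem_erase.mp hj).1
              simp only [Ne, Fin.ext_iff, Fin.coe_castLE, inc]
              intro hc
              exact this (Fin.ext hc)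
            rw [hpdF j, if_neg hmι, mul_zero, sub_zero, claim1 _ hmι]
            have h1 := hsub_ne _ hmι
            have h2 := hden_ne _ (hcastN j)
            field_simp
            ring
    _ = -(A (inc n i) t * A N t).trace / (t i - 1) ^ 2 := by
        field_simp
        ring

/-- With `δ = Σᵢ tᵢ(tᵢ − 1) ∂/∂tᵢ`:
`(δ + 1)(Σ_{j=1}^{n+1} tr(A_j A_{n+2})/(t_j − 1)) = θ_{n+3} d_{n+2} + θ_{n+2}(ρ + θ_{n+2})`,
where `d_{n+2}` is the `(2,2)`-entry of `A_{n+2}`. -/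
theorem delta_trace_sum
    (n : ℕ) (hn : 2 ≤ n) (θ : Fin (n + 3) → ℂ)
    (U : Set (Fin n → ℂ)) (hU : IsOpen U)
    (A : Fin (n + 2) → (Fin n → ℂ) → Matrix (Fin 2) (Fin 2) ℂ)
    (hdist : ∀ t ∈ U, ∀ j k : Fin (n + 2), j ≠ k → ext n t j ≠ ext n t k)
    (hHol : ∀ (j : Fin (n + 2)) (k l : Fin 2),
      DifferentiableOn ℂ (fun s => A j s k l) U)
    (hdet : ∀ t ∈ U, ∀ j, (A j t).det = 0)
    (htr : ∀ t ∈ U, ∀ j : Fin (n + 2), (A j t).trace = θ (Fin.castSucc j))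
    (hsum : ∀ t ∈ U, ∑ j, A j t =
      -Matrix.diagonal ![rho n θ, rho n θ + θ (Fin.last (n + 2))])
    (hSch1 : ∀ t ∈ U, ∀ (i : Fin n) (j : Fin (n + 2)), j ≠ inc n i →
      ∀ (k l : Fin 2),
        pderiv n i (fun s => A j s k l) t
          = ((t i - ext n t j)⁻¹ •
              (A (inc n i) t * A j t - A j t * A (inc n i) t)) k l)
    (hSch2 : ∀ t ∈ U, ∀ (i : Fin n) (k l : Fin 2),
      pderiv n i (fun s => A (inc n i) s k l) t
        = ∑ j ∈ Finset.univ.filter (fun j => j ≠ inc n i),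
            ((t i - ext n t j)⁻¹ •
              (A j t * A (inc n i) t - A (inc n i) t * A j t)) k l)
    :
    ∀ t ∈ U,
      (∑ i, t i * (t i - 1) *
          pderiv n i (fun s => ∑ j : Fin (n + 1),
            (A (Fin.castLE (by omega) j) s * A ⟨n + 1, by omega⟩ s).trace
              / (ext n s (Fin.castLE (by omega) j) - 1)) t)
        + (∑ j : Fin (n + 1),
            (A (Fin.castLE (by omega) j) t * A ⟨n + 1, by omega⟩ t).trace
              / (ext n t (Fin.castLE (by omega) j) - 1))
        = θ (Fin.last (n + 2)) * A ⟨n + 1, by omega⟩ t 1 1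
            + θ ⟨n + 1, by omega⟩ * (rho n θ + θ ⟨n + 1, by omega⟩) := by
  intro t ht
  have hle : n + 1 ≤ n + 2 := by omega
  set N : Fin (n + 2) := ⟨n + 1, by omega⟩ with hNdef
  have hdiff : ∀ (j : Fin (n + 2)) (k l : Fin 2),
      DifferentiableAt ℂ (fun s => A j s k l) t :=
    fun j k l => (hHol j k l).differentiableAt (hU.mem_nhds ht)
  have hkey : ∀ i : Fin n,
      pderiv n i (fun s => ∑ j : Fin (n + 1),
        (A (Fin.castLE hle j) s * A N s).trace
          / (ext n s (Fin.castLE hle j) - 1)) t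
      = -(A (inc n i) t * A N t).trace / (t i - 1) ^ 2 :=
    fun i => key n A t i hdiff (hdist t ht)
      (fun j hj k l => hSch1 t ht i j hj k l) (hSch2 t ht i)
  have hti1 : ∀ i : Fin n, t i - 1 ≠ 0 := by
    intro i
    have hNι : inc n i ≠ N := by
      simp only [Ne, Fin.ext_iff, Fin.coe_castLE, inc, hNdef]
      have := i.isLt; omega
    have := hdist t ht (inc n i) N hNι
    rw [ext_lt t (inc n i) i.isLt, ext_n1 t N rfl] at this
    exact sub_ne_zero.mpr this
  -- the value of the second sum termwise
  have hcast2 : ∀ q : Fin n, Fin.castLE hle (Fin.castSucc q) = inc n q := fun q => rfl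
  have hext_inc : ∀ q : Fin n, ext n t (inc n q) = t q := fun q => ext_lt t _ q.isLt
  have hsum2 : (∑ j : Fin (n + 1),
      (A (Fin.castLE hle j) t * A N t).trace / (ext n t (Fin.castLE hle j) - 1))
      = (∑ q : Fin n, (A (inc n q) t * A N t).trace / (t q - 1))
        - (A (⟨n, by omega⟩ : Fin (n + 2)) t * A N t).trace := by
    rw [Fin.sum_univ_castSucc]
    simp only [hcast2, hext_inc,
      show Fin.castLE hle (Fin.last n) = (⟨n, by omega⟩ : Fin (n + 2)) from rfl,
      ext_n t (⟨n, by omega⟩ : Fin (n + 2)) rfl]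
    ring
  rw [hsum2]
  have hfirst : (∑ i, t i * (t i - 1) *
      pderiv n i (fun s => ∑ j : Fin (n + 1),
        (A (Fin.castLE hle j) s * A N s).trace
          / (ext n s (Fin.castLE hle j) - 1)) t)
      = ∑ i : Fin n, (- t i) * (A (inc n i) t * A N t).trace / (t i - 1) := by
    refine Finset.sum_congr rfl fun i _ => ?_
    rw [hkey i]
    have := hti1 i
    field_simp
  rw [hfirst]
  have hcomb : (∑ i : Fin n, (- t i) * (A (inc n i) t * A N t).trace / (t i - 1))
      + (∑ q : Fin n, (A (inc n q) t * A N t).trace / (t q - 1))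
      = -∑ q : Fin n, (A (inc n q) t * A N t).trace := by
    rw [← Finset.sum_add_distrib, ← Finset.sum_neg_distrib]
    refine Finset.sum_congr rfl fun q _ => ?_
    have := hti1 q
    field_simp
    ring
  rw [← add_sub_assoc, hcomb]
  -- sum over all indices
  have hall : ∑ m : Fin (n + 2), (A m t * A N t).trace
      = (∑ q : Fin n, (A (inc n q) t * A N t).trace)
        + (A (⟨n, by omega⟩ : Fin (n + 2)) t * A N t).trace
        + (A N t * A N t).trace := by
    rw [Fin.sum_univ_castSucc, Fin.sum_univ_castSucc]
    simp only [show ∀ q : Fin n, Fin.castSucc (Fin.castSucc q) = inc n q from fun q => rfl,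
      show Fin.castSucc (Fin.last n) = (⟨n, by omega⟩ : Fin (n + 2)) from rfl,
      show Fin.last (n + 1) = N from rfl]
  have htot : ∑ m : Fin (n + 2), (A m t * A N t).trace
      = ((-Matrix.diagonal ![rho n θ, rho n θ + θ (Fin.last (n + 2))]) * A N t).trace := by
    rw [← Matrix.trace_sum, ← Finset.sum_mul, hsum t ht]
  have hfin : (∑ q : Fin n, (A (inc n q) t * A N t).trace)
      + (A (⟨n, by omega⟩ : Fin (n + 2)) t * A N t).trace
      = ((-Matrix.diagonal ![rho n θ, rho n θ + θ (Fin.last (n + 2))]) * A N t).trace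
        - (A N t * A N t).trace := by
    rw [← htot, hall]; ring
  have hXtr : A N t 0 0 + A N t 1 1 = θ ⟨n + 1, by omega⟩ := by
    have h := htr t ht N
    rw [Matrix.trace_fin_two] at h
    exact h
  have hXdet : A N t 0 0 * A N t 1 1 - A N t 0 1 * A N t 1 0 = 0 := by
    have h := hdet t ht N
    rw [Matrix.det_fin_two] at h
    exact h
  have hDX : ((-Matrix.diagonal ![rho n θ, rho n θ + θ (Fin.last (n + 2))]) * A N t).trace
      = -(rho n θ * A N t 0 0 + (rho n θ + θ (Fin.last (n + 2))) * A N t 1 1) := by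
    simp [Matrix.trace_fin_two, Matrix.mul_apply, Fin.sum_univ_two,
      Matrix.diagonal_apply, Matrix.neg_apply]
    ring
  have hXX : (A N t * A N t).trace
      = A N t 0 0 * A N t 0 0 + 2 * (A N t 0 1 * A N t 1 0) + A N t 1 1 * A N t 1 1 := by
    rw [Matrix.trace_fin_two]
    simp [Matrix.mul_apply, Fin.sum_univ_two]
    ring
  linear_combination (-1 : ℂ) * hfin - hDX + hXX
    + (rho n θ + θ ⟨n + 1, by omega⟩ + A N t 0 0 + A N t 1 1) * hXtr - 2 * hXdet
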